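/- arXiv:math/0509558 — 2 statements merged into one kernel-verified Lean document; each statement's English description precedes it below -/
import Mathlib

section
/- With ψ and γ_ψ as above, for all a, b ≥ 0: ∫ π(dr) ∫_0^r e^{-aℓ}(1 - e^{-b(r-ℓ)}) dℓ = γ_ψ(a,b) - ψ(a)/a - βb, where ψ(a)/a is interpreted as ψ'(0) = α when a = 0. -/
open MeasureTheory Set Filter Topology


lemma aux_nonneg (x : ℝ) : 0 ≤ Real.exp (-x) - 1 + x := by
  have h := Real.add_one_le_exp (-x); linarith

lemma aux_exp_le_one {x : ℝ} (hx : 0 ≤ x) : Real.exp (-x) ≤ 1 := by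
  have : Real.exp (-x) ≤ Real.exp 0 := Real.exp_le_exp.mpr (by linarith)
  simpa using this

lemma aux_one_sub_le (x : ℝ) : 1 - Real.exp (-x) ≤ x := by
  have h := Real.add_one_le_exp (-x); linarith

lemma L_exp (c r : ℝ) (hc : c ≠ 0) :
    ∫ l in (0:ℝ)..r, Real.exp (c * l) = (Real.exp (c * r) - 1) / c := by
  have hd : ∀ x ∈ uIcc (0:ℝ) r,
      HasDerivAt (fun y => Real.exp (c * y) / c) (Real.exp (c * x)) x := by
    intro x _
    have h1 : HasDerivAt (fun y : ℝ => c * y) c x := by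
      simpa using (hasDerivAt_id x).const_mul c
    have h2 := h1.exp.div_const c
    simpa [mul_div_assoc, mul_div_cancel_right₀ _ hc] using h2
  rw [intervalIntegral.integral_eq_sub_of_hasDerivAt hd
    ((Real.continuous_exp.comp (continuous_const.mul continuous_id)).intervalIntegrable 0 r)]
  simp [sub_div]

lemma L_Q (c r : ℝ) (hc : c ≠ 0) :
    ∫ l in (0:ℝ)..r, (1 - Real.exp (-c * l)) = r - (1 - Real.exp (-(c * r))) / c := by
  have hcont : Continuous fun l : ℝ => Real.exp (-c * l) :=
    Real.continuous_exp.comp (continuous_const.mul continuous_id)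
  rw [intervalIntegral.integral_sub intervalIntegrable_const (hcont.intervalIntegrable 0 r)]
  rw [L_exp (-c) r (neg_ne_zero.mpr hc)]
  simp only [intervalIntegral.integral_const, smul_eq_mul, sub_zero, mul_one]
  rw [show (-c) * r = -(c*r) by ring, div_neg,
    show (1 - Real.exp (-(c * r))) = -(Real.exp (-(c * r)) - 1) by ring, neg_div]

lemma aux_le_quad {x : ℝ} (hx : 0 ≤ x) : Real.exp (-x) - 1 + x ≤ x ^ 2 / 2 := by
  have h1 : ∫ l in (0:ℝ)..x, (1 - Real.exp (-1 * l)) ≤ ∫ l in (0:ℝ)..x, l := by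
    apply intervalIntegral.integral_mono_on hx
    · exact (continuous_const.sub (Real.continuous_exp.comp
        (continuous_const.mul continuous_id))).intervalIntegrable 0 x
    · exact continuous_id.intervalIntegrable 0 x
    · intro t ht
      have := aux_one_sub_le t
      simpa using this
  rw [L_Q 1 x one_ne_zero, integral_id] at h1
  norm_num at h1 ⊢
  linarith

lemma aux_le_lin {x : ℝ} (hx : 0 ≤ x) : Real.exp (-x) - 1 + x ≤ x := by
  have := aux_exp_le_one hx; linarith

lemma inner_calc (a b r : ℝ) :
    (∫ l in (0:ℝ)..r, Real.exp (-a * l) * (1 - Real.exp (-b * (r - l))))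
      = (r - Real.exp (-(b * r)) * ∫ l in (0:ℝ)..r, Real.exp ((b - a) * l))
        - ∫ l in (0:ℝ)..r, (1 - Real.exp (-a * l)) := by
  have key : ∀ l : ℝ, Real.exp (-a * l) * (1 - Real.exp (-b * (r - l)))
      = (1 - Real.exp (-(b * r)) * Real.exp ((b - a) * l)) - (1 - Real.exp (-a * l)) := by
    intro l
    have h : Real.exp (-(b * r)) * Real.exp ((b - a) * l)
        = Real.exp (-a * l) * Real.exp (-b * (r - l)) := by
      rw [← Real.exp_add, ← Real.exp_add]; ring_nf
    rw [h]; ring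
  have c1 : Continuous fun l : ℝ => Real.exp ((b - a) * l) :=
    Real.continuous_exp.comp (continuous_const.mul continuous_id)
  have c2 : Continuous fun l : ℝ => Real.exp (-a * l) :=
    Real.continuous_exp.comp (continuous_const.mul continuous_id)
  simp only [key]
  rw [intervalIntegral.integral_sub
      (f := fun l => 1 - Real.exp (-(b * r)) * Real.exp ((b - a) * l))
      (g := fun l => 1 - Real.exp (-a * l))
      ((continuous_const.sub (continuous_const.mul c1)).intervalIntegrable 0 r)
      ((continuous_const.sub c2).intervalIntegrable 0 r),
    intervalIntegral.integral_sub (f := fun _ => (1:ℝ))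
      (g := fun l => Real.exp (-(b * r)) * Real.exp ((b - a) * l)) intervalIntegrable_const
      ((continuous_const.mul c1).intervalIntegrable 0 r),
    intervalIntegral.integral_const_mul]
  simp

lemma integrable_min_of_lintegral {π : Measure ℝ}
    (hπ : ∫⁻ r in Ioi (0 : ℝ), ENNReal.ofReal (min r (r ^ 2)) ∂π < ⊤) :
    Integrable (fun r => min r (r ^ 2)) (π.restrict (Ioi 0)) := by
  constructor
  · exact (continuous_id.min (continuous_pow 2)).aestronglyMeasurable
  · rw [hasFiniteIntegral_iff_ofReal]
    · exact hπ
    · filter_upwards [ae_restrict_mem measurableSet_Ioi] with r hr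
      exact le_min hr.le (sq_nonneg r)

lemma f_bound {c r : ℝ} (hc : 0 ≤ c) (hr : 0 < r) :
    Real.exp (-c * r) - 1 + c * r ≤ max c (c ^ 2 / 2) * min r (r ^ 2) := by
  have hcr : 0 ≤ c * r := mul_nonneg hc hr.le
  rcases le_total r 1 with h | h
  · have hmin : min r (r ^ 2) = r ^ 2 := min_eq_right (by nlinarith)
    have hq : Real.exp (-c * r) - 1 + c * r ≤ (c * r) ^ 2 / 2 := by
      have := aux_le_quad hcr
      simpa [neg_mul] using this
    rw [hmin]
    calc Real.exp (-c * r) - 1 + c * r ≤ (c * r) ^ 2 / 2 := hq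
      _ = c ^ 2 / 2 * r ^ 2 := by ring
      _ ≤ max c (c ^ 2 / 2) * r ^ 2 := by
          apply mul_le_mul_of_nonneg_right (le_max_right _ _) (sq_nonneg r)
  · have hmin : min r (r ^ 2) = r := min_eq_left (by nlinarith)
    have hl : Real.exp (-c * r) - 1 + c * r ≤ c * r := by
      have := aux_le_lin hcr
      simpa [neg_mul] using this
    rw [hmin]
    calc Real.exp (-c * r) - 1 + c * r ≤ c * r := hl
      _ ≤ max c (c ^ 2 / 2) * r := by
          apply mul_le_mul_of_nonneg_right (le_max_left _ _) (by linarith)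

lemma f_integrable {π : Measure ℝ}
    (hm : Integrable (fun r => min r (r ^ 2)) (π.restrict (Ioi 0)))
    {c : ℝ} (hc : 0 ≤ c) :
    Integrable (fun r => Real.exp (-c * r) - 1 + c * r) (π.restrict (Ioi 0)) := by
  refine (hm.const_mul (max c (c ^ 2 / 2))).mono' ?_ ?_
  · exact ((Real.continuous_exp.comp (continuous_const.mul continuous_id)).sub
      continuous_const |>.add (continuous_const.mul continuous_id)).aestronglyMeasurable
  · filter_upwards [ae_restrict_mem measurableSet_Ioi] with r hr
    rw [Real.norm_eq_abs, abs_of_nonneg (by simpa [neg_mul] using aux_nonneg (c * r))]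
    exact f_bound hc hr

lemma deriv_integrable {π : Measure ℝ}
    (hm : Integrable (fun r => min r (r ^ 2)) (π.restrict (Ioi 0)))
    {c : ℝ} (hc : 0 ≤ c) :
    Integrable (fun r => r - r * Real.exp (-c * r)) (π.restrict (Ioi 0)) := by
  refine (hm.const_mul (max 1 c)).mono' ?_ ?_
  · exact (continuous_id.sub (continuous_id.mul (Real.continuous_exp.comp
      (continuous_const.mul continuous_id)))).aestronglyMeasurable
  · filter_upwards [ae_restrict_mem measurableSet_Ioi] with r hr
    have hrp : (0:ℝ) < r := hr
    have hcr : 0 ≤ c * r := mul_nonneg hc hrp.le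
    have h1 : Real.exp (-c * r) ≤ 1 := by simpa [neg_mul] using aux_exp_le_one hcr
    have h2 : 1 - Real.exp (-c * r) ≤ c * r := by
      simpa [neg_mul] using aux_one_sub_le (c * r)
    have h0 : 0 ≤ Real.exp (-c * r) := (Real.exp_pos _).le
    have heq : r - r * Real.exp (-c * r) = r * (1 - Real.exp (-c * r)) := by ring
    rw [Real.norm_eq_abs, heq, abs_of_nonneg (by nlinarith)]
    rcases le_total r 1 with h | h
    · have hmin : min r (r ^ 2) = r ^ 2 := min_eq_right (by nlinarith)
      rw [hmin]
      calc r * (1 - Real.exp (-c * r)) ≤ r * (c * r) := by nlinarith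
        _ = c * r ^ 2 := by ring
        _ ≤ max 1 c * r ^ 2 := mul_le_mul_of_nonneg_right (le_max_right _ _) (sq_nonneg r)
    · have hmin : min r (r ^ 2) = r := min_eq_left (by nlinarith)
      rw [hmin]
      calc r * (1 - Real.exp (-c * r)) ≤ r * 1 := by nlinarith
        _ ≤ max 1 c * r := by nlinarith [le_max_left (1:ℝ) c]

lemma convex_f (r : ℝ) : ConvexOn ℝ univ (fun c : ℝ => Real.exp (-c * r) - 1 + c * r) := by
  refine ⟨convex_univ, fun x _ y _ t s ht hs hts => ?_⟩
  simp only [smul_eq_mul]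
  have h := convexOn_exp.2 (mem_univ (-(x * r))) (mem_univ (-(y * r))) ht hs hts
  simp only [smul_eq_mul] at h
  have h2 : Real.exp (-(t * x + s * y) * r) ≤ t * Real.exp (-x * r) + s * Real.exp (-y * r) := by
    rw [show -(t * x + s * y) * r = t * -(x * r) + s * -(y * r) by ring]
    simpa [neg_mul] using h
  nlinarith [h2, hts]

lemma slope_ineq {l₀ l : ℝ} (h0 : l₀ ≤ l) (hl : l < 0) (r : ℝ) :
    (Real.exp (-l * r) - 1 + l * r) / (-l) ≤ (Real.exp (-l₀ * r) - 1 + l₀ * r) / (-l₀) := by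
  have hl₀ : l₀ < 0 := lt_of_le_of_lt h0 hl
  have hsec := (convex_f r).secant_mono (a := 0) (mem_univ 0) (mem_univ l₀) (mem_univ l)
    (ne_of_lt hl₀) (ne_of_lt hl) h0
  simp only [neg_zero, zero_mul, Real.exp_zero, sub_zero, add_zero, sub_self] at hsec
  -- hsec : (f l₀ - 0) / (l₀ - 0) ≤ (f l - 0) / (l - 0)
  rw [div_neg, div_neg]
  exact neg_le_neg (by simpa using hsec)

lemma f_hasDeriv (r x : ℝ) :
    HasDerivAt (fun l : ℝ => Real.exp (-l * r) - 1 + l * r) (r - r * Real.exp (-x * r)) x := by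
  have h1 : HasDerivAt (fun l : ℝ => -l * r) (-r) x := by
    simpa using ((hasDerivAt_id x).neg.mul_const r)
  have h2 := (h1.exp.sub_const 1).add (hasDerivAt_mul_const r)
  exact h2.congr_deriv (by ring)

lemma slope_tendsto (r : ℝ) :
    Tendsto (fun l => (Real.exp (-l * r) - 1 + l * r) / l) (𝓝[≠] (0:ℝ)) (𝓝 0) := by
  have hd : HasDerivAt (fun l : ℝ => Real.exp (-l * r) - 1 + l * r) 0 0 := by
    have := f_hasDeriv r 0
    simpa using this
  have h := hasDerivAt_iff_tendsto_slope.mp hd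
  apply h.congr
  intro l
  rw [slope_def_field]
  simp

lemma hasDeriv_F {π : Measure ℝ} [SigmaFinite π]
    (hm : Integrable (fun r => min r (r ^ 2)) (π.restrict (Ioi 0)))
    {a : ℝ} (ha : 0 ≤ a) :
    HasDerivAt (fun l => ∫ r in Ioi (0:ℝ), (Real.exp (-l * r) - 1 + l * r) ∂π)
      (∫ r in Ioi (0:ℝ), (r - r * Real.exp (-a * r)) ∂π) a := by
  have hmeas : ∀ l : ℝ, AEStronglyMeasurable (fun r => (Real.exp (-l * r) - 1 + l * r) / l)
      (π.restrict (Ioi 0)) := fun l =>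
    (((Real.continuous_exp.comp (continuous_const.mul continuous_id)).sub
      continuous_const |>.add (continuous_const.mul continuous_id)).div_const l).aestronglyMeasurable
  rcases eq_or_lt_of_le ha with rfl | hpos
  · -- a = 0
    have hF0 : (∫ r in Ioi (0:ℝ), (Real.exp (-(0:ℝ) * r) - 1 + 0 * r) ∂π) = 0 := by simp
    have hval : (∫ r in Ioi (0:ℝ), (r - r * Real.exp (-(0:ℝ) * r)) ∂π) = 0 := by simp
    rw [hval, hasDerivAt_iff_tendsto_slope]
    have hslope_eq : ∀ l : ℝ,
        slope (fun l => ∫ r in Ioi (0:ℝ), (Real.exp (-l * r) - 1 + l * r) ∂π) 0 l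
        = ∫ r in Ioi (0:ℝ), (Real.exp (-l * r) - 1 + l * r) / l ∂π := by
      intro l
      rw [slope_def_field, hF0, integral_div]
      simp
    rw [← nhdsLT_sup_nhdsGT, tendsto_sup]
    constructor
    · -- left limit
      by_cases hex : ∃ l₀, l₀ < 0 ∧
          Integrable (fun r => Real.exp (-l₀ * r) - 1 + l₀ * r) (π.restrict (Ioi 0))
      · obtain ⟨l₀, hl₀, hint⟩ := hex
        have hT : Tendsto (fun l : ℝ => ∫ r in Ioi (0:ℝ),
            (Real.exp (-l * r) - 1 + l * r) / l ∂π) (𝓝[<] 0) (𝓝 0) := by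
          have := tendsto_integral_filter_of_dominated_convergence
            (μ := π.restrict (Ioi 0)) (l := 𝓝[<] (0:ℝ))
            (F := fun l r => (Real.exp (-l * r) - 1 + l * r) / l)
            (f := fun _ => (0:ℝ))
            (bound := fun r => (Real.exp (-l₀ * r) - 1 + l₀ * r) / (-l₀))
            (Eventually.of_forall hmeas) ?_ (hint.div_const (-l₀)) ?_
          · simpa using this
          · filter_upwards [Ioo_mem_nhdsLT hl₀] with l hl
            refine Eventually.of_forall fun r => ?_
            have hfnn : 0 ≤ Real.exp (-l * r) - 1 + l * r := by
              simpa [neg_mul] using aux_nonneg (l * r)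
            rw [Real.norm_eq_abs, abs_div, abs_of_nonneg hfnn, abs_of_neg hl.2]
            exact slope_ineq hl.1.le hl.2 r
          · refine Eventually.of_forall fun r => ?_
            exact (slope_tendsto r).mono_left
              (nhdsWithin_mono 0 fun x hx => ne_of_lt hx)
        exact hT.congr fun l => (hslope_eq l).symm
      · push_neg at hex
        refine Tendsto.congr' ?_ (tendsto_const_nhds (x := (0:ℝ)))
        filter_upwards [self_mem_nhdsWithin] with l hl
        have hl' : l < 0 := hl
        have h0 : (∫ r in Ioi (0:ℝ), (Real.exp (-l * r) - 1 + l * r) / l ∂π) = 0 := by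
          apply integral_undef
          intro hI
          have h2 := hI.mul_const l
          simp only [div_mul_cancel₀ _ (ne_of_lt hl')] at h2
          exact hex l hl' h2
        rw [hslope_eq l, h0]
    · -- right limit
      have hT : Tendsto (fun l : ℝ => ∫ r in Ioi (0:ℝ),
          (Real.exp (-l * r) - 1 + l * r) / l ∂π) (𝓝[>] 0) (𝓝 0) := by
        have := tendsto_integral_filter_of_dominated_convergence
          (μ := π.restrict (Ioi 0)) (l := 𝓝[>] (0:ℝ))
          (F := fun l r => (Real.exp (-l * r) - 1 + l * r) / l)
          (f := fun _ => (0:ℝ))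
          (bound := fun r => min r (r ^ 2))
          (Eventually.of_forall hmeas) ?_ hm ?_
        · simpa using this
        · filter_upwards [Ioo_mem_nhdsGT (by norm_num : (0:ℝ) < 2)] with l hl
          filter_upwards [ae_restrict_mem measurableSet_Ioi] with r hr
          have hrp : (0:ℝ) < r := hr
          have hlp : 0 < l := hl.1
          have hlr : 0 ≤ l * r := mul_nonneg hlp.le hrp.le
          have hfnn : 0 ≤ Real.exp (-l * r) - 1 + l * r := by
            simpa [neg_mul] using aux_nonneg (l * r)
          have hq : Real.exp (-l * r) - 1 + l * r ≤ (l * r) ^ 2 / 2 := by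
            simpa [neg_mul] using aux_le_quad hlr
          have hlin : Real.exp (-l * r) - 1 + l * r ≤ l * r := by
            simpa [neg_mul] using aux_le_lin hlr
          rw [Real.norm_eq_abs, abs_div, abs_of_nonneg hfnn, abs_of_pos hlp]
          refine le_min ?_ ?_
          · rw [div_le_iff₀ hlp]
            nlinarith
          · rw [div_le_iff₀ hlp]
            nlinarith [sq_nonneg r, hl.2.le,
              mul_nonneg (mul_nonneg hlp.le (sub_nonneg.mpr hl.2.le)) (sq_nonneg r)]
        · refine Eventually.of_forall fun r => ?_
          exact (slope_tendsto r).mono_left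
            (nhdsWithin_mono 0 fun x hx => ne_of_gt hx)
      exact hT.congr fun l => (hslope_eq l).symm
  · -- 0 < a
    have key := hasDerivAt_integral_of_dominated_loc_of_deriv_le
      (μ := π.restrict (Ioi 0)) (x₀ := a) (s := Metric.ball a a)
      (F := fun l r => Real.exp (-l * r) - 1 + l * r)
      (F' := fun l r => r - r * Real.exp (-l * r))
      (bound := fun r => max 1 (2 * a) * min r (r ^ 2))
      (Metric.ball_mem_nhds a hpos)
      (Eventually.of_forall fun l => (((Real.continuous_exp.comp
        (continuous_const.mul continuous_id)).sub continuous_const |>.add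
        (continuous_const.mul continuous_id)).aestronglyMeasurable))
      (f_integrable hm ha)
      ((continuous_id.sub (continuous_id.mul (Real.continuous_exp.comp
        (continuous_const.mul continuous_id)))).aestronglyMeasurable)
      ?_ (hm.const_mul _) ?_
    · exact key.2
    · filter_upwards [ae_restrict_mem measurableSet_Ioi] with r hr
      intro x hx
      have hrp : (0:ℝ) < r := hr
      rw [Real.ball_eq_Ioo, sub_self] at hx
      obtain ⟨hx0, hx2⟩ := hx
      have hxr : 0 ≤ x * r := mul_nonneg hx0.le hrp.le
      have h1 : Real.exp (-x * r) ≤ 1 := by simpa [neg_mul] using aux_exp_le_one hxr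
      have h2 : 1 - Real.exp (-x * r) ≤ x * r := by
        simpa [neg_mul] using aux_one_sub_le (x * r)
      have h0 : 0 ≤ Real.exp (-x * r) := (Real.exp_pos _).le
      have hx2' : x ≤ 2 * a := by linarith
      rw [Real.norm_eq_abs, show r - r * Real.exp (-x * r) = r * (1 - Real.exp (-x * r)) by ring,
        abs_of_nonneg (by nlinarith)]
      rcases le_total r 1 with h | h
      · have hmin : min r (r ^ 2) = r ^ 2 := min_eq_right (by nlinarith)
        rw [hmin]
        calc r * (1 - Real.exp (-x * r)) ≤ r * (x * r) := by nlinarith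
          _ = x * r ^ 2 := by ring
          _ ≤ 2 * a * r ^ 2 := by nlinarith [sq_nonneg r]
          _ ≤ max 1 (2 * a) * r ^ 2 :=
              mul_le_mul_of_nonneg_right (le_max_right _ _) (sq_nonneg r)
      · have hmin : min r (r ^ 2) = r := min_eq_left (by nlinarith)
        rw [hmin]
        calc r * (1 - Real.exp (-x * r)) ≤ r * 1 := by nlinarith
          _ ≤ max 1 (2 * a) * r := by nlinarith [le_max_left (1:ℝ) (2 * a)]
    · exact Eventually.of_forall fun r => fun x _ => f_hasDeriv r x


/-- With `ψ` and `γ_ψ` as in Statement 3, for all `a, b ≥ 0`: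
`∫ π(dr) ∫_0^r e^{-aℓ}(1 - e^{-b(r-ℓ)}) dℓ = γ_ψ(a,b) - ψ(a)/a - βb`,
where `ψ(a)/a` is interpreted as `ψ'(0) = α` when `a = 0`. -/
theorem stmt4 (α β : ℝ) (hα : 0 ≤ α) (hβ : 0 ≤ β)
    (π : Measure ℝ) [SigmaFinite π]
    (hπ : ∫⁻ r in Ioi (0 : ℝ), ENNReal.ofReal (min r (r ^ 2)) ∂π < ⊤)
    (ψ : ℝ → ℝ)
    (hψ : ∀ l : ℝ, ψ l = α * l + β * l ^ 2 +
      ∫ r in Ioi (0 : ℝ), (Real.exp (-l * r) - 1 + l * r) ∂π)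
    (γψ : ℝ → ℝ → ℝ)
    (hγψ : ∀ a b, γψ a b = if a = b then deriv ψ a else (ψ a - ψ b) / (a - b))
    (a b : ℝ) (ha : 0 ≤ a) (hb : 0 ≤ b) :
    ∫ r in Ioi (0 : ℝ),
        (∫ l in (0 : ℝ)..r, Real.exp (-a * l) * (1 - Real.exp (-b * (r - l)))) ∂π
      = γψ a b - (if a = 0 then α else ψ a / a) - β * b := by
  have hm := integrable_min_of_lintegral hπ
  by_cases hab : a = b
  · subst hab
    rw [hγψ, if_pos rfl]
    have hψfun : ψ = fun l => α * l + β * l ^ 2 +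
        ∫ r in Ioi (0:ℝ), (Real.exp (-l * r) - 1 + l * r) ∂π := funext hψ
    have hpoly : HasDerivAt (fun l : ℝ => α * l + β * l ^ 2) (α + β * (2 * a)) a := by
      have h1 : HasDerivAt (fun l : ℝ => α * l) α a := by
        simpa using (hasDerivAt_id a).const_mul α
      have h2 : HasDerivAt (fun l : ℝ => β * l ^ 2) (β * (2 * a)) a := by
        simpa using (hasDerivAt_pow 2 a).const_mul β
      exact h1.add h2
    have hψd : HasDerivAt ψ ((α + β * (2 * a)) +
        ∫ r in Ioi (0:ℝ), (r - r * Real.exp (-a * r)) ∂π) a := by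
      rw [hψfun]; exact hpoly.add (hasDeriv_F hm ha)
    rw [hψd.deriv]
    by_cases ha0 : a = 0
    · subst ha0
      rw [if_pos rfl]
      simp
    · rw [if_neg ha0]
      have hQint : Integrable (fun r => (Real.exp (-a * r) - 1 + a * r) / a)
          (π.restrict (Ioi 0)) := (f_integrable hm ha).div_const a
      have hDint := deriv_integrable (π := π) hm ha
      have hψa : ψ a / a = α + β * a +
          ∫ r in Ioi (0:ℝ), (Real.exp (-a * r) - 1 + a * r) / a ∂π := by
        rw [hψ a, integral_div]
        field_simp
      rw [hψa]
      have hkey : ∀ r : ℝ,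
          (∫ l in (0:ℝ)..r, Real.exp (-a * l) * (1 - Real.exp (-a * (r - l))))
          = (r - r * Real.exp (-a * r)) - (Real.exp (-a * r) - 1 + a * r) / a := by
        intro r
        rw [inner_calc, L_Q a r ha0]
        simp only [sub_self, zero_mul, Real.exp_zero, intervalIntegral.integral_const,
          smul_eq_mul, mul_one, neg_mul]
        field_simp
        ring
      simp only [hkey]
      rw [integral_sub hDint hQint]
      ring
  · rw [hγψ, if_neg hab]
    have hab' : a - b ≠ 0 := sub_ne_zero.mpr hab
    have hba' : b - a ≠ 0 := sub_ne_zero.mpr (Ne.symm hab)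
    have hfa := f_integrable (π := π) hm ha
    have hfb := f_integrable (π := π) hm hb
    have hDint : Integrable (fun r =>
        ((Real.exp (-a * r) - 1 + a * r) - (Real.exp (-b * r) - 1 + b * r)) / (a - b))
        (π.restrict (Ioi 0)) := (hfa.sub hfb).div_const _
    have h1 : (ψ a - ψ b) / (a - b) = α + β * (a + b) +
        ∫ r in Ioi (0:ℝ),
          ((Real.exp (-a * r) - 1 + a * r) - (Real.exp (-b * r) - 1 + b * r)) / (a - b) ∂π := by
      rw [hψ a, hψ b, integral_div, integral_sub hfa hfb]
      field_simp
      ring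
    rw [h1]
    by_cases ha0 : a = 0
    · subst ha0
      rw [if_pos rfl]
      have hb0 : b ≠ 0 := Ne.symm hab
      have hkey : ∀ r : ℝ,
          (∫ l in (0:ℝ)..r, Real.exp (-0 * l) * (1 - Real.exp (-b * (r - l))))
          = ((Real.exp (-0 * r) - 1 + 0 * r) - (Real.exp (-b * r) - 1 + b * r)) / (0 - b) := by
        intro r
        rw [inner_calc]
        simp only [neg_zero, zero_mul, Real.exp_zero, sub_self, sub_zero,
          intervalIntegral.integral_zero, neg_mul, zero_add, zero_sub]
        rw [L_exp b r hb0]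
        simp only [Real.exp_neg]
        field_simp
        ring
      simp only [hkey]
      ring
    · rw [if_neg ha0]
      have hψa : ψ a / a = α + β * a +
          ∫ r in Ioi (0:ℝ), (Real.exp (-a * r) - 1 + a * r) / a ∂π := by
        rw [hψ a, integral_div]
        field_simp
      rw [hψa]
      have hQint : Integrable (fun r => (Real.exp (-a * r) - 1 + a * r) / a)
          (π.restrict (Ioi 0)) := (f_integrable hm ha).div_const a
      have hkey : ∀ r : ℝ,
          (∫ l in (0:ℝ)..r, Real.exp (-a * l) * (1 - Real.exp (-b * (r - l))))
          = ((Real.exp (-a * r) - 1 + a * r) - (Real.exp (-b * r) - 1 + b * r)) / (a - b)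
            - (Real.exp (-a * r) - 1 + a * r) / a := by
        intro r
        rw [inner_calc, L_exp (b - a) r hba', L_Q a r ha0]
        rw [show (b - a) * r = b * r - a * r by ring, Real.exp_sub]
        simp only [neg_mul, Real.exp_neg]
        field_simp
        ring
      simp only [hkey]
      rw [integral_sub hDint hQint]
      ring
end

section
/- Let h be a continuous nonnegative function on ℝ₊, and for s ≤ s' define m_h(s,s') = inf_{s ≤ r ≤ s'} h(r). Define d_h(s,s') = h(s) + h(s') - 2 m_h(s ∧ s', s ∨ s'). Then d_h is a pseudometric on ℝ₊: d_h(s,s) = 0, d_h is symmetric, and d_h satisfies the triangle inequality d_h(s,u) ≤ d_h(s,t) + d_h(t,u) for all s, t, u ≥ 0. -/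
open Set

/-- For a continuous nonnegative function `h` on `ℝ₊`, with
`m_h(s,s') = inf_{s ≤ r ≤ s'} h(r)` and `d_h(s,s') = h(s) + h(s') - 2 m_h(s∧s', s∨s')`,
`d_h` is a pseudometric on `ℝ₊`: it vanishes on the diagonal, is symmetric, and
satisfies the triangle inequality. -/
theorem stmt19 (h : ℝ → ℝ) (hcont : Continuous h) (hnn : ∀ t, 0 ≤ h t)
    (m : ℝ → ℝ → ℝ) (hm : ∀ s s', m s s' = sInf (h '' Icc s s'))
    (d : ℝ → ℝ → ℝ) (hd : ∀ s s', d s s' = h s + h s' - 2 * m (min s s') (max s s')) :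
    (∀ s, 0 ≤ s → d s s = 0) ∧
    (∀ s s', 0 ≤ s → 0 ≤ s' → d s s' = d s' s) ∧
    (∀ s t u, 0 ≤ s → 0 ≤ t → 0 ≤ u → d s u ≤ d s t + d t u) := by
  have hbdd : ∀ a b : ℝ, BddBelow (h '' Icc a b) := by
    intro a b
    exact ⟨0, by rintro y ⟨x, -, rfl⟩; exact hnn x⟩
  have hmle : ∀ a b x : ℝ, a ≤ x → x ≤ b → m a b ≤ h x := by
    intro a b x h1 h2
    rw [hm]
    exact csInf_le (hbdd a b) ⟨x, ⟨h1, h2⟩, rfl⟩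
  have hmono : ∀ a b c e : ℝ, a ≤ c → c ≤ e → e ≤ b → m a b ≤ m c e := by
    intro a b c e h1 h2 h3
    rw [hm, hm]
    exact csInf_le_csInf (hbdd a b) ((nonempty_Icc.2 h2).image h)
      (image_mono (f := h) (Icc_subset_Icc h1 (le_trans h3 le_rfl)))
  have hsplit : ∀ s t u : ℝ, s ≤ t → t ≤ u → min (m s t) (m t u) ≤ m s u := by
    intro s t u h1 h2
    rw [hm s u]
    refine le_csInf ((nonempty_Icc.2 (h1.trans h2)).image h) ?_
    rintro y ⟨x, ⟨hx1, hx2⟩, rfl⟩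
    rcases le_total x t with hx | hx
    · exact le_trans (min_le_left _ _) (hmle s t x hx1 hx)
    · exact le_trans (min_le_right _ _) (hmle t u x hx hx2)
  have hdiag : ∀ s : ℝ, d s s = 0 := by
    intro s
    rw [hd, min_self, max_self, hm, Icc_self, image_singleton, csInf_singleton]
    ring
  have hsym : ∀ s s' : ℝ, d s s' = d s' s := by
    intro s s'
    rw [hd, hd, min_comm, max_comm]
    ring
  have htri : ∀ s t u : ℝ, s ≤ u → d s u ≤ d s t + d t u := by
    intro s t u hsu
    rw [hd s u, hd s t, hd t u, min_eq_left hsu, max_eq_right hsu]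
    rcases le_total t s with hts | hst
    · rw [min_eq_right hts, max_eq_left hts, min_eq_left (hts.trans hsu),
        max_eq_right (hts.trans hsu)]
      have h1 : m t u ≤ m s u := hmono t u s u hts hsu le_rfl
      have h2 : m t s ≤ h t := hmle t s t le_rfl hts
      linarith
    · rcases le_total t u with htu | hut
      · rw [min_eq_left hst, max_eq_right hst, min_eq_left htu, max_eq_right htu]
        have h1 := hsplit s t u hst htu
        have h2 : m s t ≤ h t := hmle s t t hst le_rfl
        have h3 : m t u ≤ h t := hmle t u t le_rfl htu
        rcases le_total (m s t) (m t u) with hc | hc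
        · rw [min_eq_left hc] at h1; linarith
        · rw [min_eq_right hc] at h1; linarith
      · rw [min_eq_left hst, max_eq_right hst, min_eq_right hut, max_eq_left hut]
        have h1 : m s t ≤ m s u := hmono s t s u le_rfl hsu hut
        have h2 : m u t ≤ h t := hmle u t t hut le_rfl
        linarith
  refine ⟨fun s _ => hdiag s, fun s s' _ _ => hsym s s', fun s t u _ _ _ => ?_⟩
  rcases le_total s u with hsu | hus
  · exact htri s t u hsu
  · calc d s u = d u s := hsym s u
      _ ≤ d u t + d t s := htri u t s hus
      _ = d s t + d t u := by rw [hsym u t, hsym t s]; ring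
end
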